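/- Let κ be a singular cardinal, σ = cf(κ), and let ⟨κ_i : i < σ⟩ be a strictly increasing sequence of regular cardinals with supremum κ such that σ < κ_i < κ for every i < σ. Let λ be a cardinal with 2 ≤ λ ≤ 2^κ. Then λ^κ = 2^κ = cf([μ]^{≤σ}, ⊆), where μ is the cardinal sum Σ_{i<σ} 2^{κ_i}. -/

import Mathlib

open Cardinal

/-- `cf([Y]^{≤κ}, ⊆)`: the least cardinality of a family of subsets of `Y` of
cardinality `≤ κ` which is cofinal under inclusion among all such subsets. -/
noncomputable def covCof (Y : Type u) (κ : Cardinal.{u}) : Cardinal.{u} :=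
  sInf {c : Cardinal.{u} |
    ∃ Q : Set {s : Set Y // #s ≤ κ}, #Q = c ∧
      ∀ a : {s : Set Y // #s ≤ κ}, ∃ b ∈ Q, a.1 ⊆ b.1}

/-- If `κ` is singular with `σ = cf(κ)`, `⟨κ_i : i < σ⟩` is a strictly increasing
sequence of regular cardinals with supremum `κ` and `σ < κ_i < κ`, and
`2 ≤ λ ≤ 2^κ`, then `λ^κ = 2^κ = cf([μ]^{≤σ}, ⊆)` where `μ = Σ_{i<σ} 2^{κ_i}`. -/
theorem stmt19 (κ σ : Cardinal.{u}) (hκinf : Cardinal.aleph0 ≤ κ)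
    (hκsing : κ.ord.cof < κ) (hσ : σ = κ.ord.cof)
    (κs : σ.ord.ToType → Cardinal.{u})
    (hreg : ∀ i, (κs i).IsRegular)
    (hmono : ∀ i j, i < j → κs i < κs j)
    (hbet : ∀ i, σ < κs i ∧ κs i < κ)
    (hsup : (⨆ i, κs i) = κ)
    (lam : Cardinal.{u}) (hlam2 : 2 ≤ lam) (hlam : lam ≤ (2 : Cardinal.{u}) ^ κ) :
    lam ^ κ = (2 : Cardinal.{u}) ^ κ ∧
    (2 : Cardinal.{u}) ^ κ =
      covCof (Cardinal.sum fun i => (2 : Cardinal.{u}) ^ κs i).ord.ToType σ := by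
  have hσinf : ℵ₀ ≤ σ := by
    rw [hσ]; exact Ordinal.aleph0_le_cof.2 (Cardinal.isSuccLimit_ord hκinf)
  have hσκ : σ < κ := hσ ▸ hκsing
  have hσκle : σ ≤ κ := hσκ.le
  have hmkι : #σ.ord.ToType = σ := by rw [Cardinal.mk_toType, Cardinal.card_ord]
  have hιne : Nonempty σ.ord.ToType := by
    refine Ordinal.toType_nonempty_iff_ne_zero.2 fun h => ?_
    have := congrArg Ordinal.card h
    rw [Cardinal.card_ord] at this
    simp at this
    exact (this ▸ hσinf).not_gt aleph0_pos
  have hsumκ : Cardinal.sum κs = κ := by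
    apply le_antisymm
    · calc Cardinal.sum κs ≤ #σ.ord.ToType * ⨆ i, κs i := Cardinal.sum_le_mk_mul_iSup κs
        _ = σ * κ := by rw [hmkι, hsup]
        _ ≤ κ * κ := mul_le_mul_left hσκle κ
        _ = κ := mul_eq_self hκinf
    · rw [← hsup]; exact ciSup_le' fun i => Cardinal.le_sum κs i
  set f : σ.ord.ToType → Cardinal.{u} := fun i => (2 : Cardinal.{u}) ^ κs i with hf
  set μ := Cardinal.sum f with hμdef
  have hκ2κ : κ ≤ 2 ^ κ := (Cardinal.cantor κ).le
  have h2κinf : ℵ₀ ≤ (2 : Cardinal.{u}) ^ κ := hκinf.trans hκ2κ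
  have hprod : Cardinal.prod f = 2 ^ κ := by
    rw [hf, ← Cardinal.power_sum, hsumκ]
  have hμ2κ : μ ≤ 2 ^ κ := by
    calc μ ≤ Cardinal.sum (fun _ : σ.ord.ToType => (2 : Cardinal.{u}) ^ κ) :=
          Cardinal.sum_le_sum _ _ fun i =>
            power_le_power_left two_ne_zero (hbet i).2.le
      _ = σ * 2 ^ κ := by rw [Cardinal.sum_const', hmkι]
      _ ≤ 2 ^ κ * 2 ^ κ := mul_le_mul_left (hσκle.trans hκ2κ) _
      _ = 2 ^ κ := mul_eq_self h2κinf
  have hκμ : κ ≤ μ := by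
    rw [← hsup]
    exact ciSup_le' fun i => (Cardinal.cantor (κs i)).le.trans (Cardinal.le_sum f i)
  have h2σμ : 2 ^ σ ≤ μ := by
    obtain ⟨i⟩ := hιne
    exact (power_le_power_left two_ne_zero (hbet i).1.le).trans (Cardinal.le_sum f i)
  have hμinf : ℵ₀ ≤ μ := hκinf.trans hκμ
  set Y := μ.ord.ToType with hYdef
  have hmkY : #Y = μ := by rw [hYdef, Cardinal.mk_toType, Cardinal.card_ord]
  set T := {s : Set Y // #s ≤ σ} with hT
  -- upper bound on #T
  have hTle : #T ≤ 2 ^ κ := by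
    calc #T ≤ max #Y ℵ₀ ^ σ := Cardinal.mk_bounded_set_le Y σ
      _ = μ ^ σ := by rw [hmkY, max_eq_left hμinf]
      _ ≤ (2 ^ κ) ^ σ := power_le_power_right hμ2κ
      _ = 2 ^ (κ * σ) := by rw [← power_mul]
      _ = 2 ^ κ := by rw [mul_eq_max hκinf hσinf, max_eq_left hσκle]
  -- lower bound on #T
  have hTge : (2 : Cardinal.{u}) ^ κ ≤ #T := by
    have he : Nonempty (Y ≃ Σ i, Quotient.out (f i)) := by
      apply Cardinal.eq.1
      rw [hmkY, Cardinal.mk_sigma]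
      simp [Cardinal.mk_out, hμdef]
    obtain ⟨e⟩ := he
    have hpi : (2 : Cardinal.{u}) ^ κ = #(∀ i, Quotient.out (f i)) := by
      rw [Cardinal.mk_pi]
      simp only [Cardinal.mk_out]
      exact hprod.symm
    rw [hpi]
    refine Cardinal.mk_le_of_injective
      (f := fun g => (⟨Set.range (fun i => e.symm ⟨i, g i⟩),
        Cardinal.mk_range_le.trans (le_of_eq hmkι)⟩ : T)) ?_
    intro g g' h
    funext i
    have hr : Set.range (fun i => e.symm ⟨i, g i⟩) = Set.range (fun j => e.symm ⟨j, g' j⟩) :=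
      congrArg Subtype.val h
    have hmem : e.symm ⟨i, g i⟩ ∈ Set.range (fun j => e.symm ⟨j, g' j⟩) := by
      rw [← hr]; exact Set.mem_range_self i
    obtain ⟨j, hj⟩ := hmem
    have hsig := e.symm.injective hj
    obtain ⟨rfl, h2⟩ := Sigma.mk.inj_iff.1 hsig
    exact (eq_of_heq h2).symm
  constructor
  · apply le_antisymm
    · calc lam ^ κ ≤ (2 ^ κ) ^ κ := power_le_power_right hlam
        _ = 2 ^ (κ * κ) := power_mul.symm
        _ = 2 ^ κ := by rw [mul_eq_self hκinf]
    · exact power_le_power_right hlam2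
  · show (2 : Cardinal.{u}) ^ κ = covCof Y σ
    unfold covCof
    have hmem : #T ∈ {c : Cardinal.{u} |
        ∃ Q : Set T, #Q = c ∧ ∀ a : T, ∃ b ∈ Q, a.1 ⊆ b.1} := by
      refine ⟨Set.univ, ?_, fun a => ⟨a, Set.mem_univ a, subset_rfl⟩⟩
      exact Cardinal.mk_univ
    apply le_antisymm
    · apply le_csInf ⟨#T, hmem⟩
      rintro c ⟨Q, rfl, hQ⟩
      -- covering singletons: μ ≤ #Q
      have hQcov : ∀ y : Y, ∃ b : T, b ∈ Q ∧ y ∈ b.1 := by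
        intro y
        obtain ⟨b, hb, hsub⟩ := hQ ⟨{y}, by
          rw [Cardinal.mk_singleton]; exact one_le_aleph0.trans hσinf⟩
        exact ⟨b, hb, hsub rfl⟩
      have hμQ : μ ≤ #Q := by
        have hstep : μ ≤ #Q * σ := by
          choose b hb hby using hQcov
          have hinj : μ ≤ #(Σ b : Q, b.1.1) := by
            rw [← hmkY]
            exact Cardinal.mk_le_of_injective
              (f := fun y => (⟨⟨b y, hb y⟩, ⟨y, hby y⟩⟩ : Σ b : Q, b.1.1))
              (fun y y' h => congrArg (fun p : Σ b : Q, b.1.1 => (p.2.1 : Y)) h)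
          refine hinj.trans ?_
          calc #(Σ b : Q, b.1.1) = Cardinal.sum (fun b : Q => #b.1.1) :=
              Cardinal.mk_sigma _
            _ ≤ Cardinal.sum (fun _ : Q => σ) :=
              Cardinal.sum_le_sum _ _ fun b => b.1.2
            _ = #Q * σ := Cardinal.sum_const' _ _
        rcases le_total (#Q) σ with hle | hle
        · exfalso
          have : μ ≤ σ := by
            calc μ ≤ #Q * σ := hstep
              _ ≤ σ * σ := mul_le_mul_left hle σ
              _ = σ := mul_eq_self hσinf
          exact (hσκ.trans_le hκμ).not_ge this
        · calc μ ≤ #Q * σ := hstep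
            _ ≤ #Q * #Q := mul_le_mul_right hle _
            _ = #Q := mul_eq_self (hσinf.trans hle)
      have hQinf : ℵ₀ ≤ #Q := hμinf.trans hμQ
      -- #T ≤ #Q * 2 ^ σ
      have hstep3 : #T ≤ #Q * 2 ^ σ := by
        choose b hb hsub using hQ
        have hkey : ∀ a : T, Subtype.val '' {x : ((⟨b a, hb a⟩ : Q) : T).1 | (x : Y) ∈ a.1} = a.1 := by
          intro a
          ext y
          constructor
          · rintro ⟨x, hx, rfl⟩; exact hx
          · intro hy; exact ⟨⟨y, hsub a hy⟩, hy, rfl⟩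
        have hinj : #T ≤ #(Σ b : Q, Set b.1.1) := by
          refine Cardinal.mk_le_of_injective
            (f := fun a => (⟨⟨b a, hb a⟩, {x | (x : Y) ∈ a.1}⟩ : Σ b : Q, Set b.1.1)) ?_
          intro a a' h
          have h2 := congrArg
            (fun p : Σ b : Q, Set b.1.1 => (Subtype.val '' p.2 : Set Y)) h
          apply Subtype.ext
          rw [← hkey a, ← hkey a']
          exact h2
        have hsig : #(Σ b : Q, Set b.1.1) = Cardinal.sum (fun b : Q => 2 ^ #b.1.1) := by
          rw [Cardinal.mk_sigma]
          congr 1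
          funext b
          exact Cardinal.mk_set
        refine hinj.trans ?_
        rw [hsig]
        calc Cardinal.sum (fun b : Q => 2 ^ #b.1.1)
            ≤ Cardinal.sum (fun _ : Q => (2 : Cardinal.{u}) ^ σ) :=
              Cardinal.sum_le_sum _ _ fun b => power_le_power_left two_ne_zero b.1.2
          _ = #Q * 2 ^ σ := Cardinal.sum_const' _ _
      calc (2 : Cardinal.{u}) ^ κ ≤ #T := hTge
        _ ≤ #Q * 2 ^ σ := hstep3
        _ ≤ #Q * #Q := mul_le_mul_right (h2σμ.trans hμQ) _
        _ = #Q := mul_eq_self hQinf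
    · exact (csInf_le' hmem).trans hTle
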